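/- Let μ₁, μ₂ ∈ ℝ^d, σ > 0 and α > 1. The Rényi divergence of order α between the product Gaussian measures ⊗_{j=1}^d N((μ₁)_j, σ²) and ⊗_{j=1}^d N((μ₂)_j, σ²) on ℝ^d equals α ‖μ₁ − μ₂‖₂² / (2σ²). Consequently, if a function f mapping datasets to ℝ^d has ℓ₂-sensitivity Δ_f = max_{D ∼ D'} ‖f(D) − f(D')‖₂, then the Gaussian mechanism M_σ f(·) = f(·) + v with v ∼ N(0, σ² I_d) is (α, α Δ_f² / (2σ²))-RDP. -/

import Mathlib

open MeasureTheory Real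

open Classical in
/-- Rényi divergence of order `a` between measures `P` and `Q`:
`(a-1)⁻¹ log ∫ (dP/dQ)^a dQ`, equal to `⊤` when `P` is not absolutely continuous
with respect to `Q` (or the integral is infinite). -/
noncomputable def renyiDiv {X : Type*} [MeasurableSpace X] (a : ℝ) (P Q : Measure X) : EReal :=
  if P ≪ Q ∧ ∫⁻ x, (P.rnDeriv Q x) ^ a ∂Q ≠ ⊤ then
    (((a - 1)⁻¹ * Real.log ((∫⁻ x, (P.rnDeriv Q x) ^ a ∂Q).toReal) : ℝ) : EReal)
  else ⊤

open scoped ENNReal NNReal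

lemma lintegral_pi_prod {n : ℕ} (μ : Fin n → Measure ℝ) [∀ i, SigmaFinite (μ i)]
    (g : Fin n → ℝ → ℝ≥0∞) (hg : ∀ i, Measurable (g i)) :
    ∫⁻ x, ∏ i, g i (x i) ∂Measure.pi μ = ∏ i, ∫⁻ x, g i x ∂μ i := by
  induction n with
  | zero => simp [lintegral_const, Measure.pi_univ]
  | succ n ih =>
    rw [← ((measurePreserving_piFinSuccAbove (fun i => μ i) 0).symm).lintegral_comp_emb
      (MeasurableEquiv.measurableEmbedding _)]
    simp_rw [MeasurableEquiv.piFinSuccAbove_symm_apply, Fin.insertNthEquiv,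
      Fin.prod_univ_succ, Fin.insertNth_zero]
    simp only [Fin.zero_succAbove, Function.comp_def, Equiv.coe_fn_mk, cast_eq, Fin.cons_zero,
      Fin.cons_succ]
    rw [lintegral_prod_mul (f := g 0) (g := fun y : Fin n → ℝ => ∏ i : Fin n, g i.succ (y i))
      (hg 0).aemeasurable
      (Finset.measurable_prod Finset.univ
        (fun (i : Fin n) _ => (hg i.succ).comp (measurable_pi_apply i))).aemeasurable]
    rw [ih _ _ (fun i => hg i.succ)]

lemma pi_eq_withDensity {n : ℕ} (P ν : Fin n → Measure ℝ) [∀ i, SigmaFinite (P i)]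
    [∀ i, SigmaFinite (ν i)] (g : Fin n → ℝ → ℝ≥0∞) (hg : ∀ i, Measurable (g i))
    (hP : ∀ i, P i = (ν i).withDensity (g i)) :
    Measure.pi P = (Measure.pi ν).withDensity (fun x => ∏ i, g i (x i)) := by
  refine (Measure.pi_eq fun s hs => ?_)
  rw [withDensity_apply _ (MeasurableSet.univ_pi hs)]
  have hind : ∀ x : Fin n → ℝ,
      (Set.univ.pi s).indicator (fun x => ∏ i, g i (x i)) x
        = ∏ i, (s i).indicator (g i) (x i) := by
    intro x
    by_cases hx : x ∈ Set.univ.pi s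
    · rw [Set.indicator_of_mem hx]
      exact Finset.prod_congr rfl fun i _ =>
        (Set.indicator_of_mem (hx i (Set.mem_univ i)) _).symm
    · rw [Set.indicator_of_notMem hx]
      simp only [Set.mem_univ_pi, not_forall] at hx
      obtain ⟨i, hi⟩ := hx
      exact (Finset.prod_eq_zero (Finset.mem_univ i) (Set.indicator_of_notMem hi _)).symm
  rw [← lintegral_indicator (MeasurableSet.univ_pi hs)]
  simp_rw [hind]
  rw [lintegral_pi_prod ν _ (fun i => (hg i).indicator (hs i))]
  refine Finset.prod_congr rfl fun i _ => ?_
  rw [lintegral_indicator (hs i), hP i, withDensity_apply _ (hs i)]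

open ProbabilityTheory in
lemma gauss_withDensity (σ : ℝ) (hσ : 0 < σ) (m₁ m₂ : ℝ) :
    gaussianReal m₁ ((σ^2).toNNReal)
      = (gaussianReal m₂ ((σ^2).toNNReal)).withDensity
          (fun x => gaussianPDF m₁ ((σ^2).toNNReal) x / gaussianPDF m₂ ((σ^2).toNNReal) x) := by
  set v := (σ^2).toNNReal with hvdef
  have hv : v ≠ 0 := by
    simp only [hvdef, ne_eq, Real.toNNReal_eq_zero, not_le]
    positivity
  rw [gaussianReal_of_var_ne_zero _ hv, gaussianReal_of_var_ne_zero _ hv,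
    ← withDensity_mul _ (measurable_gaussianPDF _ _)
      (show Measurable fun x => gaussianPDF m₁ v x / gaussianPDF m₂ v x from
        (measurable_gaussianPDF _ _).div (measurable_gaussianPDF _ _))]
  congr 1
  funext x
  exact (ENNReal.mul_div_cancel' (fun h => absurd h (gaussianPDF_pos _ hv x).ne')
    (fun h => absurd h ENNReal.ofReal_ne_top)).symm

open ProbabilityTheory in
lemma gauss_lintegral_rpow (α σ : ℝ) (hα : 1 < α) (hσ : 0 < σ) (m₁ m₂ : ℝ) :
    ∫⁻ x, (gaussianPDF m₁ ((σ^2).toNNReal) x / gaussianPDF m₂ ((σ^2).toNNReal) x) ^ α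
        ∂(gaussianReal m₂ ((σ^2).toNNReal))
      = ENNReal.ofReal (Real.exp (α * (α-1) * (m₁ - m₂)^2 / (2 * σ^2))) := by
  set v := (σ^2).toNNReal with hvdef
  have hv : v ≠ 0 := by
    simp only [hvdef, ne_eq, Real.toNNReal_eq_zero, not_le]
    positivity
  have hvr : (v:ℝ) = σ^2 := Real.coe_toNNReal _ (sq_nonneg σ)
  have hreal : ∀ x : ℝ, gaussianPDFReal m₂ v x
        * (gaussianPDFReal m₁ v x / gaussianPDFReal m₂ v x) ^ α
      = Real.exp (α * (α-1) * (m₁ - m₂)^2 / (2 * σ^2))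
        * gaussianPDFReal (α * m₁ - (α - 1) * m₂) v x := by
    intro x
    simp only [gaussianPDFReal, hvr]
    set c := (Real.sqrt (2 * π * σ^2))⁻¹ with hcdef
    have hc : 0 < c := by rw [hcdef]; positivity
    rw [mul_div_mul_left _ _ hc.ne', ← Real.exp_sub,
      Real.rpow_def_of_pos (Real.exp_pos _), Real.log_exp, mul_assoc, ← Real.exp_add,
      show Real.exp (α * (α-1) * (m₁ - m₂)^2 / (2 * σ^2))
          * (c * Real.exp (-(x - (α * m₁ - (α - 1) * m₂))^2 / (2 * σ^2)))
        = c * Real.exp (α * (α-1) * (m₁ - m₂)^2 / (2 * σ^2)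
            + -(x - (α * m₁ - (α - 1) * m₂))^2 / (2 * σ^2)) by rw [Real.exp_add]; ring]
    congr 1
    have hs2 : σ^2 ≠ 0 := by positivity
    field_simp
    ring
  rw [gaussianReal_of_var_ne_zero _ hv,
    lintegral_withDensity_eq_lintegral_mul _ (measurable_gaussianPDF _ _)
      (show Measurable fun x => (gaussianPDF m₁ v x / gaussianPDF m₂ v x) ^ α from
        ((measurable_gaussianPDF _ _).div (measurable_gaussianPDF _ _)).pow measurable_const)]
  have hkey : ∀ x : ℝ, gaussianPDF m₂ v x * ((gaussianPDF m₁ v x / gaussianPDF m₂ v x) ^ α)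
      = ENNReal.ofReal (Real.exp (α * (α-1) * (m₁ - m₂)^2 / (2 * σ^2)))
        * gaussianPDF (α * m₁ - (α - 1) * m₂) v x := by
    intro x
    rw [gaussianPDF, gaussianPDF, gaussianPDF,
      ← ENNReal.ofReal_div_of_pos (gaussianPDFReal_pos _ _ _ hv),
      ENNReal.ofReal_rpow_of_pos
        (div_pos (gaussianPDFReal_pos _ _ _ hv) (gaussianPDFReal_pos _ _ _ hv)),
      ← ENNReal.ofReal_mul (gaussianPDFReal_nonneg _ _ _),
      ← ENNReal.ofReal_mul (Real.exp_nonneg _), hreal x]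
  simp only [Pi.mul_apply, hkey]
  rw [lintegral_const_mul _ (measurable_gaussianPDF _ _),
    lintegral_gaussianPDF_eq_one _ hv, mul_one]

open ProbabilityTheory in
lemma renyi_gauss {d : ℕ} (α σ : ℝ) (hα : 1 < α) (hσ : 0 < σ) (μ₁ μ₂ : Fin d → ℝ) :
    renyiDiv α (Measure.pi fun j => gaussianReal (μ₁ j) ((σ ^ 2).toNNReal))
        (Measure.pi fun j => gaussianReal (μ₂ j) ((σ ^ 2).toNNReal)) =
      ((α * (∑ j, (μ₁ j - μ₂ j) ^ 2) / (2 * σ ^ 2) : ℝ) : EReal) := by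
  set v := (σ^2).toNNReal with hvdef
  set g : Fin d → ℝ → ℝ≥0∞ :=
    fun j x => gaussianPDF (μ₁ j) v x / gaussianPDF (μ₂ j) v x with hgdef
  have hg : ∀ j, Measurable (g j) :=
    fun j => (measurable_gaussianPDF _ _).div (measurable_gaussianPDF _ _)
  set G : (Fin d → ℝ) → ℝ≥0∞ := fun x => ∏ j, g j (x j) with hGdef
  have hG : Measurable G := Finset.measurable_prod _ fun j _ => (hg j).comp (measurable_pi_apply j)
  set Q := Measure.pi fun j => gaussianReal (μ₂ j) v with hQdef
  have hpi : Measure.pi (fun j => gaussianReal (μ₁ j) v) = Q.withDensity G :=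
    pi_eq_withDensity _ _ g hg (fun j => gauss_withDensity σ hσ _ _)
  have hac : Measure.pi (fun j => gaussianReal (μ₁ j) v) ≪ Q := by
    rw [hpi]; exact withDensity_absolutelyContinuous _ _
  have hrn : (Measure.pi (fun j => gaussianReal (μ₁ j) v)).rnDeriv Q =ᵐ[Q] G := by
    rw [hpi]; exact Measure.rnDeriv_withDensity _ hG
  have hint : ∫⁻ x, ((Measure.pi (fun j => gaussianReal (μ₁ j) v)).rnDeriv Q x) ^ α ∂Q
      = ENNReal.ofReal (Real.exp (α * (α-1) * (∑ j, (μ₁ j - μ₂ j)^2) / (2 * σ^2))) := by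
    rw [lintegral_congr_ae ((hrn.mono fun x hx => by simp only [hx]) :
      (fun x => ((Measure.pi (fun j => gaussianReal (μ₁ j) v)).rnDeriv Q x) ^ α)
        =ᵐ[Q] fun x => G x ^ α)]
    calc ∫⁻ x, G x ^ α ∂Q = ∫⁻ x, ∏ j, (g j (x j)) ^ α ∂Q := by
          refine lintegral_congr fun x => ?_
          rw [hGdef]
          exact (ENNReal.prod_rpow_of_nonneg (by linarith : (0:ℝ) ≤ α)).symm
      _ = ∏ j, ∫⁻ x, (g j x) ^ α ∂(gaussianReal (μ₂ j) v) :=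
          lintegral_pi_prod _ _ (fun j => (hg j).pow measurable_const)
      _ = ∏ j, ENNReal.ofReal (Real.exp (α * (α-1) * (μ₁ j - μ₂ j)^2 / (2 * σ^2))) :=
          Finset.prod_congr rfl fun j _ => gauss_lintegral_rpow α σ hα hσ _ _
      _ = _ := by
          rw [← ENNReal.ofReal_prod_of_nonneg (fun j _ => Real.exp_nonneg _), ← Real.exp_sum]
          congr 1
          rw [← Finset.sum_div, ← Finset.mul_sum]
  rw [renyiDiv, if_pos ⟨hac, by rw [hint]; exact ENNReal.ofReal_ne_top⟩, hint]
  congr 1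
  rw [ENNReal.toReal_ofReal (Real.exp_nonneg _), Real.log_exp]
  have h1 : α - 1 ≠ 0 := by linarith
  field_simp

open ProbabilityTheory in
/-- The Rényi divergence between two isotropic Gaussians `⊗ N((μ₁)_j, σ²)` and
`⊗ N((μ₂)_j, σ²)` equals `α ‖μ₁ - μ₂‖₂² / (2σ²)`; consequently the Gaussian
mechanism `f(·) + N(0, σ² I_d)` applied to a function of ℓ₂-sensitivity `Δ` is
`(α, α Δ²/(2σ²))`-RDP on every pair of neighboring datasets. -/
theorem gaussian_mechanism_rdp {d : ℕ} (α σ : ℝ) (hα : 1 < α) (hσ : 0 < σ)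
    (μ₁ μ₂ : Fin d → ℝ)
    {Dataset : Type*} (Neighbor : Dataset → Dataset → Prop)
    (f : Dataset → Fin d → ℝ) (Δ : ℝ)
    (hΔ : ∀ D D', Neighbor D D' →
      Real.sqrt (∑ j, (f D j - f D' j) ^ 2) ≤ Δ) :
    renyiDiv α (Measure.pi fun j => gaussianReal (μ₁ j) ((σ ^ 2).toNNReal))
        (Measure.pi fun j => gaussianReal (μ₂ j) ((σ ^ 2).toNNReal)) =
      ((α * (∑ j, (μ₁ j - μ₂ j) ^ 2) / (2 * σ ^ 2) : ℝ) : EReal) ∧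
    ∀ D D', Neighbor D D' →
      renyiDiv α (Measure.pi fun j => gaussianReal (f D j) ((σ ^ 2).toNNReal))
          (Measure.pi fun j => gaussianReal (f D' j) ((σ ^ 2).toNNReal)) ≤
        ((α * Δ ^ 2 / (2 * σ ^ 2) : ℝ) : EReal) := by
  refine ⟨renyi_gauss α σ hα hσ μ₁ μ₂, fun D D' hDD' => ?_⟩
  rw [renyi_gauss α σ hα hσ (f D) (f D')]
  rw [EReal.coe_le_coe_iff]
  have hS : (0:ℝ) ≤ ∑ j, (f D j - f D' j) ^ 2 :=
    Finset.sum_nonneg fun j _ => sq_nonneg _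
  have hle : (∑ j, (f D j - f D' j) ^ 2) ≤ Δ ^ 2 := by
    have h := hΔ D D' hDD'
    calc (∑ j, (f D j - f D' j) ^ 2)
        = Real.sqrt (∑ j, (f D j - f D' j) ^ 2) ^ 2 := (Real.sq_sqrt hS).symm
      _ ≤ Δ ^ 2 := by
          apply pow_le_pow_left₀ (Real.sqrt_nonneg _) h
  have hα0 : (0:ℝ) ≤ α := by linarith
  have hσ2 : (0:ℝ) < 2 * σ ^ 2 := by positivity
  gcongr
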